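/- Let m ≥ 2. The ring endomorphism of ℝ⟦X₁, …, X_m⟧ given by the substitution X_i ↦ X_i·X_m for 1 ≤ i ≤ m−1 and X_m ↦ X_m is injective. -/

import Mathlib

/-- `IsSubstitutionBy σ φ` says that the ℝ-algebra endomorphism `φ` of
`ℝ⟦X₁, …, X_m⟧` is the substitution `X_k ↦ σ k`: it sends each variable `X_k`
to `σ k`, and it does not decrease the order of series (which, together with the
values on the variables, uniquely determines the substitution endomorphism when
each `σ k` has zero constant term). -/
def IsSubstitutionBy {m : ℕ} (σ : Fin m → MvPowerSeries (Fin m) ℝ)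
    (φ : MvPowerSeries (Fin m) ℝ →ₐ[ℝ] MvPowerSeries (Fin m) ℝ) : Prop :=
  (∀ k, φ (MvPowerSeries.X k) = σ k) ∧
  ∀ (F : MvPowerSeries (Fin m) ℝ) (d : ℕ),
    (∀ α : Fin m →₀ ℕ, (∑ j, α j) < d → MvPowerSeries.coeff α F = 0) →
    ∀ β : Fin m →₀ ℕ, (∑ j, β j) < d → MvPowerSeries.coeff β (φ F) = 0


open MvPowerSeries Finsupp

private lemma prod_monomial_one {m : ℕ} (s : Finset (Fin m)) (β : Fin m → (Fin m →₀ ℕ)) :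
    (∏ j ∈ s, monomial (β j) (1:ℝ)) = monomial (∑ j ∈ s, β j) 1 := by
  induction s using Finset.induction with
  | empty => simp [MvPowerSeries.monomial_zero_one]
  | insert _ _ h ih =>
      rw [Finset.prod_insert h, Finset.sum_insert h, ih, monomial_mul_monomial, one_mul]

/-- The substitution `X_i ↦ X_i · X_m` for `1 ≤ i ≤ m−1`, `X_m ↦ X_m`,
acts injectively on `ℝ⟦X₁, …, X_m⟧`. -/
theorem blowup_all_subst_injective (m : ℕ) (hm : 2 ≤ m)
    (φ : MvPowerSeries (Fin m) ℝ →ₐ[ℝ] MvPowerSeries (Fin m) ℝ)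
    (hφ : IsSubstitutionBy
      (fun k => if k = (⟨m - 1, by omega⟩ : Fin m) then
          MvPowerSeries.X (⟨m - 1, by omega⟩ : Fin m)
        else MvPowerSeries.X k * MvPowerSeries.X (⟨m - 1, by omega⟩ : Fin m)) φ) :
    Function.Injective φ := by
  set e : Fin m := ⟨m - 1, by omega⟩ with he
  obtain ⟨hX0, hord⟩ := hφ
  have hX : ∀ k : Fin m, φ (MvPowerSeries.X k) =
      if k = e then (X e : MvPowerSeries (Fin m) ℝ) else X k * X e := fun k => hX0 k
  -- the exponent substitution
  set s : (Fin m →₀ ℕ) → ℕ := fun α => ∑ j, if j = e then 0 else α j with hs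
  set T : (Fin m →₀ ℕ) → (Fin m →₀ ℕ) := fun α => α + Finsupp.single e (s α) with hT
  have hTne : ∀ α (j : Fin m), j ≠ e → T α j = α j := by
    intro α j hj
    simp [hT, Finsupp.single_apply, hj.symm]
  have hTinj : Function.Injective T := by
    intro a b hab
    have hsab : s a = s b := by
      apply Finset.sum_congr rfl
      intro j _
      by_cases hj : j = e
      · simp [hj]
      · simp only [if_neg hj]
        rw [← hTne a j hj, ← hTne b j hj, hab]
    ext j
    by_cases hj : j = e
    · subst hj
      have h1 := congrArg (fun f => f e) hab
      simp [hT, Finsupp.add_apply, Finsupp.single_apply] at h1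
      omega
    · rw [← hTne a j hj, ← hTne b j hj, hab]
  have hTsum : ∀ α, (∑ j, T α j) = (∑ j, α j) + s α := by
    intro α
    simp only [hT, Finsupp.add_apply, Finset.sum_add_distrib]
    congr 1
    simp [Finsupp.single_apply]
  -- φ on monomials
  have hmono : ∀ (α : Fin m →₀ ℕ) (c : ℝ), φ (monomial α c) = monomial (T α) c := by
    intro α c
    have h1 : (monomial α c : MvPowerSeries (Fin m) ℝ) = c • monomial α 1 := by
      rw [← LinearMap.map_smul, smul_eq_mul, mul_one]
    have h2 : (monomial (T α) c : MvPowerSeries (Fin m) ℝ) = c • monomial (T α) 1 := by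
      rw [← LinearMap.map_smul, smul_eq_mul, mul_one]
    rw [h1, h2, map_smul]
    congr 1
    have h3 : (monomial α 1 : MvPowerSeries (Fin m) ℝ) = ∏ j, (X j : MvPowerSeries (Fin m) ℝ) ^ α j := by
      have : ∀ j : Fin m, (X j : MvPowerSeries (Fin m) ℝ) ^ α j = monomial (Finsupp.single j (α j)) 1 :=
        fun j => X_pow_eq j (α j)
      rw [Finset.prod_congr rfl (fun j _ => this j), prod_monomial_one]
      congr 1
      ext i; simp [Finsupp.single_apply]
    rw [h3, map_prod]
    have hα : (∑ j, Finsupp.single j (α j)) = α := by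
      ext i; simp [Finsupp.single_apply]
    have h4 : ∀ j : Fin m, φ (X j ^ α j) =
        monomial (Finsupp.single j (α j) + Finsupp.single e (if j = e then 0 else α j)) 1 := by
      intro j
      rw [map_pow, hX j]
      by_cases hj : j = e
      · subst hj
        rw [if_pos rfl, X_pow_eq]
        simp
      · rw [if_neg hj, mul_pow, X_pow_eq, X_pow_eq, monomial_mul_monomial, one_mul]
        simp [hj]
    calc (∏ j, φ (X j ^ α j))
        = ∏ j, monomial (Finsupp.single j (α j) + Finsupp.single e (if j = e then 0 else α j)) 1 :=
          Finset.prod_congr rfl (fun j _ => h4 j)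
      _ = monomial (∑ j, (Finsupp.single j (α j) + Finsupp.single e (if j = e then 0 else α j))) 1 :=
          prod_monomial_one _ _
      _ = monomial (T α) 1 := by
          congr 1
          rw [Finset.sum_add_distrib, hα, ← Finsupp.single_finset_sum]
  -- key: coefficient extraction
  have hkey : ∀ (F : MvPowerSeries (Fin m) ℝ) (α : Fin m →₀ ℕ),
      MvPowerSeries.coeff (T α) (φ F) = MvPowerSeries.coeff α F := by
    intro F α
    set d : ℕ := (∑ j, T α j) + 1 with hd
    set S : Finset (Fin m →₀ ℕ) :=
      (Finset.Iic (Finsupp.equivFunOnFinite.symm fun _ => d)).filter (fun γ => (∑ j, γ j) < d) with hS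
    have hmemS : ∀ γ : Fin m →₀ ℕ, (∑ j, γ j) < d → γ ∈ S := by
      intro γ hγ
      refine Finset.mem_filter.mpr ⟨Finset.mem_Iic.mpr ?_, hγ⟩
      intro j
      have : γ j ≤ ∑ i, γ i := Finset.single_le_sum (fun i _ => Nat.zero_le _) (Finset.mem_univ j)
      simpa using le_trans this (le_of_lt hγ)
    set P : MvPowerSeries (Fin m) ℝ := ∑ γ ∈ S, monomial γ (MvPowerSeries.coeff γ F) with hP
    have hPco : ∀ γ ∈ S, MvPowerSeries.coeff γ P = MvPowerSeries.coeff γ F := by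
      intro γ hγ
      rw [hP, map_sum]
      rw [Finset.sum_eq_single_of_mem γ hγ]
      · rw [MvPowerSeries.coeff_monomial_same]
      · intro b _ hb
        rw [MvPowerSeries.coeff_monomial, if_neg (Ne.symm hb)]
    have hrest : MvPowerSeries.coeff (T α) (φ (F - P)) = 0 := by
      apply hord (F - P) d
      · intro γ hγ
        rw [map_sub, hPco γ (hmemS γ hγ), sub_self]
      · rw [hd]; omega
    have hαS : α ∈ S := by
      apply hmemS
      have : (∑ j, α j) ≤ ∑ j, T α j := by rw [hTsum]; omega
      omega
    have hφP : MvPowerSeries.coeff (T α) (φ P) = MvPowerSeries.coeff α F := by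
      rw [hP, map_sum, map_sum]
      rw [Finset.sum_eq_single_of_mem α hαS]
      · rw [hmono, MvPowerSeries.coeff_monomial_same]
      · intro b _ hb
        rw [hmono, MvPowerSeries.coeff_monomial, if_neg (fun h => hb (hTinj h.symm))]
    have : MvPowerSeries.coeff (T α) (φ F) =
        MvPowerSeries.coeff (T α) (φ P) + MvPowerSeries.coeff (T α) (φ (F - P)) := by
      rw [← map_add, ← map_add, add_sub_cancel]
    rw [this, hrest, add_zero, hφP]
  -- conclude
  rw [injective_iff_map_eq_zero]
  intro F hF
  ext α
  rw [← hkey F α, hF, map_zero, map_zero]
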